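/- (Unconditional global stability of the alternative scheme.) Let I = ℝ/ℤ, J ≥ 3, h = 1/J, Δt > 0, M ∈ ℕ, and let X⁰, X¹, …, X^M ∈ [V^h]² be such that for each m = 0,…,M−1, ((X^m·e₁)² D_t X^{m+1}, η |X^m_ρ|²) + ((X^m·e₁)² X^{m+1}_ρ, η_ρ) + (X^{m+1}·e₁, η·e₁ |X^{m+1}_ρ|²) = 0 for all η ∈ [V^h]², where D_t X^{m+1} = (X^{m+1} − X^m)/Δt. Then for every n ∈ {0,…,M−1}: ½ ((X^{n+1}·e₁)², |X^{n+1}_ρ|²) + Δt ∑_{m=0}^{n} ((X^m·e₁)² |D_t X^{m+1}|², |X^m_ρ|²) ≤ ½ ((X⁰·e₁)², |X⁰_ρ|²). -/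

import Mathlib

/- STATEMENT 5: Unconditional global stability (eq. (4.7) of the paper) of the
alternative fully discrete scheme `(Q^{h,Δt})` for axisymmetric mean curvature flow
on `I = ℝ/ℤ`. -/

open MeasureTheory Real Set
open scoped RealInnerProductSpace

noncomputable section

abbrev E2 := EuclideanSpace ℝ (Fin 2)

def e1 : E2 := EuclideanSpace.single 0 1

/-- The periodic piecewise affine finite element space `[V^h]²`: continuous 1-periodic
functions that are affine on each subinterval `[j/J, (j+1)/J]` of `[0,1]`. -/
def Vh (J : ℕ) : Set (ℝ → E2) :=
  {f | Continuous f ∧ Function.Periodic f 1 ∧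
    ∀ j : ℕ, j < J → ∃ a b : E2,
      ∀ ρ ∈ Set.Icc ((j : ℝ)/J) (((j : ℝ)+1)/J), f ρ = a + ρ • b}

/-- The scheme form of `(Q^{h,Δt})`: `((X^m·e₁)² D_t X^{m+1}, η |X^m_ρ|²)
+ ((X^m·e₁)² X^{m+1}_ρ, η_ρ) + (X^{m+1}·e₁, η·e₁ |X^{m+1}_ρ|²)`. -/
def Qform (Δt : ℝ) (Xm Xnew η : ℝ → E2) : ℝ :=
  ∫ ρ in (0:ℝ)..1,
    (⟪Xm ρ, e1⟫^2 * ⟪Δt⁻¹ • (Xnew ρ - Xm ρ), η ρ⟫ * ‖deriv Xm ρ‖^2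
      + ⟪Xm ρ, e1⟫^2 * ⟪deriv Xnew ρ, deriv η ρ⟫
      + ⟪Xnew ρ, e1⟫ * ⟪η ρ, e1⟫ * ‖deriv Xnew ρ‖^2)

lemma vh_sub {J : ℕ} {f g : ℝ → E2} (hf : f ∈ Vh J) (hg : g ∈ Vh J) : f - g ∈ Vh J := by
  obtain ⟨hfc, hfp, hfa⟩ := hf
  obtain ⟨hgc, hgp, hga⟩ := hg
  refine ⟨hfc.sub hgc, hfp.sub hgp, fun j hj => ?_⟩
  obtain ⟨a1, b1, h1⟩ := hfa j hj
  obtain ⟨a2, b2, h2⟩ := hga j hj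
  exact ⟨a1 - a2, b1 - b2, fun ρ hρ => by
    simp [Pi.sub_apply, h1 ρ hρ, h2 ρ hρ, smul_sub]; abel⟩


lemma exists_subinterval {J : ℕ} (hJ : 0 < J) {ρ : ℝ} (h0 : 0 < ρ) (h1 : ρ < 1)
    (hbp : ∀ j : ℕ, j ≤ J → ρ ≠ (j:ℝ)/J) :
    ∃ j : ℕ, j < J ∧ ρ ∈ Ioo ((j:ℝ)/J) (((j:ℝ)+1)/J) := by
  have hJ' : (0:ℝ) < J := by exact_mod_cast hJ
  set t := ρ * J with ht
  have htpos : 0 < t := by positivity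
  have htJ : t < J := by nlinarith
  refine ⟨⌊t⌋₊, (Nat.floor_lt htpos.le).mpr htJ, ?_, ?_⟩
  · rw [div_lt_iff₀ hJ']
    refine lt_of_le_of_ne (Nat.floor_le htpos.le) ?_
    intro hEq
    exact hbp ⌊t⌋₊ ((Nat.floor_lt htpos.le).mpr htJ).le (by field_simp [ht] at hEq ⊢; linarith)
  · rw [lt_div_iff₀ hJ']
    have := Nat.lt_floor_add_one t
    linarith


lemma vh_ae {J : ℕ} (hJ : 0 < J) {f : ℝ → E2} (hf : f ∈ Vh J) :
    ∃ C : ℝ, ∀ᵐ ρ ∂(volume.restrict (Set.Ioc (0:ℝ) 1)),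
      DifferentiableAt ℝ f ρ ∧ ‖deriv f ρ‖ ≤ C := by
  choose a b hab using hf.2.2
  classical
  set B : ℕ → ℝ := fun j => if h : j < J then ‖b j h‖ else 0 with hB
  refine ⟨∑ j ∈ Finset.range J, B j, ?_⟩
  set S : Finset ℝ := (Finset.range (J+1)).image (fun j : ℕ => (j:ℝ)/J) with hS
  have h0 : volume (↑S : Set ℝ) = 0 := S.finite_toSet.measure_zero _
  have hbp : ∀ᵐ ρ : ℝ, ρ ∉ (↑S : Set ℝ) := measure_eq_zero_iff_ae_notMem.mp h0
  filter_upwards [ae_restrict_mem measurableSet_Ioc, ae_restrict_of_ae hbp] with ρ hρ hρS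
  have hρ1 : ρ ≠ 1 := by
    intro h; apply hρS; rw [hS]
    simp only [Finset.coe_image, Set.mem_image, Finset.mem_coe, Finset.mem_range]
    exact ⟨J, by omega, by rw [h]; field_simp⟩
  have hbp' : ∀ j : ℕ, j ≤ J → ρ ≠ (j:ℝ)/J := by
    intro j hj h
    apply hρS; rw [hS]
    simp only [Finset.coe_image, Set.mem_image, Finset.mem_coe, Finset.mem_range]
    exact ⟨j, by omega, h.symm⟩
  obtain ⟨j, hjJ, hmem⟩ := exists_subinterval hJ hρ.1 (lt_of_le_of_ne hρ.2 hρ1) hbp'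
  have haff : f =ᶠ[nhds ρ] (fun x => a j hjJ + x • b j hjJ) :=
    Filter.eventuallyEq_of_mem (Ioo_mem_nhds hmem.1 hmem.2)
      (fun x hx => hab j hjJ x (Ioo_subset_Icc_self hx))
  have hd : HasDerivAt f (b j hjJ) ρ := by
    have : HasDerivAt (fun x : ℝ => a j hjJ + x • b j hjJ) (b j hjJ) ρ := by
      simpa using ((hasDerivAt_id ρ).smul_const (b j hjJ)).const_add (a j hjJ)
    exact this.congr_of_eventuallyEq haff
  refine ⟨hd.differentiableAt, ?_⟩
  rw [hd.deriv]
  calc ‖b j hjJ‖ = B j := by simp [hB, hjJ]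
    _ ≤ ∑ i ∈ Finset.range J, B i :=
        Finset.single_le_sum (fun i _ => by simp only [hB]; split <;> positivity)
          (Finset.mem_range.mpr hjJ)

lemma integrable_of_ae_bound {f : ℝ → ℝ} {C : ℝ}
    (hm : AEStronglyMeasurable f (volume.restrict (Ioc (0:ℝ) 1)))
    (hb : ∀ᵐ ρ ∂(volume.restrict (Ioc (0:ℝ) 1)), |f ρ| ≤ C) :
    Integrable f (volume.restrict (Ioc (0:ℝ) 1)) := by
  have h : IntegrableOn (fun _ : ℝ => C) (Ioc (0:ℝ) 1) volume :=
    integrableOn_const measure_Ioc_lt_top.ne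
  exact h.mono' hm (by simpa [Real.norm_eq_abs] using hb)


lemma norm_e1 : ‖e1‖ = 1 := by simp [e1]


lemma prod2_bound {x y Cx Cy : ℝ} (hx : |x| ≤ Cx) (hy : |y| ≤ Cy) :
    |x^2 * y^2| ≤ Cx^2 * Cy^2 := by
  have hx2 : x^2 ≤ Cx^2 := sq_le_sq' (abs_le.mp hx).1 (abs_le.mp hx).2
  have hy2 : y^2 ≤ Cy^2 := sq_le_sq' (abs_le.mp hy).1 (abs_le.mp hy).2
  have hCx : 0 ≤ Cx := (abs_nonneg x).trans hx
  rw [abs_of_nonneg (by positivity)]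
  exact mul_le_mul hx2 hy2 (sq_nonneg _) (by positivity)

lemma prod3_bound {x y z Cx Cy Cz : ℝ} (hx : |x| ≤ Cx) (hy : |y| ≤ Cy) (hz : |z| ≤ Cz) :
    |x^2 * y^2 * z^2| ≤ Cx^2 * Cy^2 * Cz^2 := by
  have hz2 : z^2 ≤ Cz^2 := sq_le_sq' (abs_le.mp hz).1 (abs_le.mp hz).2
  have h2 : |x^2 * y^2| ≤ Cx^2 * Cy^2 := prod2_bound hx hy
  have hCx : 0 ≤ Cx := (abs_nonneg x).trans hx
  have hCy : 0 ≤ Cy := (abs_nonneg y).trans hy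
  rw [abs_of_nonneg (by positivity)] at h2 ⊢
  exact mul_le_mul h2 hz2 (sq_nonneg _) (by positivity)

lemma abs_norm_le {v : E2} {C : ℝ} (h : ‖v‖ ≤ C) : |‖v‖| ≤ C := by
  rwa [abs_of_nonneg (norm_nonneg _)]

set_option maxHeartbeats 1000000 in
lemma step_ineq {J : ℕ} (hJ : 0 < J) {Δt : ℝ} (hΔt : 0 < Δt)
    {f g : ℝ → E2} (hf : f ∈ Vh J) (hg : g ∈ Vh J)
    (hQ : Qform Δt f g (g - f) = 0) :
    Δt * (∫ ρ in (0:ℝ)..1, ⟪f ρ, e1⟫^2 * ‖Δt⁻¹ • (g ρ - f ρ)‖^2 * ‖deriv f ρ‖^2)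
      + (1/2) * (∫ ρ in (0:ℝ)..1, ⟪g ρ, e1⟫^2 * ‖deriv g ρ‖^2)
      ≤ (1/2) * (∫ ρ in (0:ℝ)..1, ⟪f ρ, e1⟫^2 * ‖deriv f ρ‖^2) := by
  set μ := volume.restrict (Ioc (0:ℝ) 1) with hμ
  obtain ⟨Df, hDf⟩ := vh_ae hJ hf
  obtain ⟨Dg, hDg⟩ := vh_ae hJ hg
  obtain ⟨Cf, hCf⟩ := isCompact_Icc.exists_bound_of_continuousOn (s := Icc (0:ℝ) 1) hf.1.continuousOn
  obtain ⟨Cg, hCg⟩ := isCompact_Icc.exists_bound_of_continuousOn (s := Icc (0:ℝ) 1) hg.1.continuousOn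
  -- measurability bits
  have mf : Measurable f := hf.1.measurable
  have mg : Measurable g := hg.1.measurable
  have mdf : Measurable (deriv f) := measurable_deriv f
  have mdg : Measurable (deriv g) := measurable_deriv g
  have maf : Measurable fun ρ => ⟪f ρ, e1⟫ := mf.inner measurable_const
  have mag : Measurable fun ρ => ⟪g ρ, e1⟫ := mg.inner measurable_const
  -- the five scalar integrands
  set uf : ℝ → ℝ := fun ρ => ⟪f ρ, e1⟫^2 * ‖deriv f ρ‖^2 with huf
  set ug : ℝ → ℝ := fun ρ => ⟪g ρ, e1⟫^2 * ‖deriv g ρ‖^2 with hug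
  set gd : ℝ → ℝ := fun ρ => ⟪f ρ, e1⟫^2 * ‖Δt⁻¹ • (g ρ - f ρ)‖^2 * ‖deriv f ρ‖^2 with hgd
  set R1 : ℝ → ℝ := fun ρ => ⟪f ρ, e1⟫^2 * ‖deriv g ρ - deriv f ρ‖^2 with hR1
  set R2 : ℝ → ℝ := fun ρ => (⟪g ρ, e1⟫ - ⟪f ρ, e1⟫)^2 * ‖deriv g ρ‖^2 with hR2
  -- pointwise bounds on inner products with e1
  have hinf : ∀ ρ ∈ Icc (0:ℝ) 1, |⟪f ρ, e1⟫| ≤ |Cf| := fun ρ hρ =>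
    (abs_real_inner_le_norm _ _).trans (by rw [norm_e1, mul_one]; exact (hCf ρ hρ).trans (le_abs_self _))
  have hing : ∀ ρ ∈ Icc (0:ℝ) 1, |⟪g ρ, e1⟫| ≤ |Cg| := fun ρ hρ =>
    (abs_real_inner_le_norm _ _).trans (by rw [norm_e1, mul_one]; exact (hCg ρ hρ).trans (le_abs_self _))
  -- integrabilities
  have hIuf : Integrable uf μ := by
    apply integrable_of_ae_bound (C := |Cf|^2 * |Df|^2)
      ((maf.pow_const 2 |>.mul (mdf.norm.pow_const 2)).aestronglyMeasurable)
    filter_upwards [hDf, ae_restrict_mem measurableSet_Ioc] with ρ hd hρ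
    have h1 := hinf ρ (Ioc_subset_Icc_self hρ)
    have h2 : ‖deriv f ρ‖ ≤ |Df| := hd.2.trans (le_abs_self _)
    exact prod2_bound h1 (abs_norm_le h2)
  have hIug : Integrable ug μ := by
    apply integrable_of_ae_bound (C := |Cg|^2 * |Dg|^2)
      ((mag.pow_const 2 |>.mul (mdg.norm.pow_const 2)).aestronglyMeasurable)
    filter_upwards [hDg, ae_restrict_mem measurableSet_Ioc] with ρ hd hρ
    have h1 := hing ρ (Ioc_subset_Icc_self hρ)
    have h2 : ‖deriv g ρ‖ ≤ |Dg| := hd.2.trans (le_abs_self _)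
    exact prod2_bound h1 (abs_norm_le h2)
  have hIgd : Integrable gd μ := by
    apply integrable_of_ae_bound (C := |Cf|^2 * (|Δt⁻¹| * (|Cg| + |Cf|))^2 * |Df|^2)
      (((maf.pow_const 2 |>.mul (((measurable_const : Measurable fun _ : ℝ => Δt⁻¹).smul (mg.sub mf)).norm.pow_const 2)).mul
        (mdf.norm.pow_const 2)).aestronglyMeasurable)
    filter_upwards [hDf, ae_restrict_mem measurableSet_Ioc] with ρ hd hρ
    have hρ' := Ioc_subset_Icc_self hρ
    have h1 := hinf ρ hρ'
    have h2 : ‖deriv f ρ‖ ≤ |Df| := hd.2.trans (le_abs_self _)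
    have h5 : ‖Δt⁻¹ • (g ρ - f ρ)‖ ≤ |Δt⁻¹| * (|Cg| + |Cf|) := by
      rw [norm_smul, Real.norm_eq_abs]
      gcongr
      exact (norm_sub_le _ _).trans (add_le_add ((hCg ρ hρ').trans (le_abs_self _))
        ((hCf ρ hρ').trans (le_abs_self _)))
    exact prod3_bound h1 (abs_norm_le h5) (abs_norm_le h2)
  have hIR1 : Integrable R1 μ := by
    apply integrable_of_ae_bound (C := |Cf|^2 * (|Dg| + |Df|)^2)
      ((maf.pow_const 2 |>.mul ((mdg.sub mdf).norm.pow_const 2)).aestronglyMeasurable)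
    filter_upwards [hDf, hDg, ae_restrict_mem measurableSet_Ioc] with ρ hdf hdg hρ
    have h1 := hinf ρ (Ioc_subset_Icc_self hρ)
    have h2 : ‖deriv g ρ - deriv f ρ‖ ≤ |Dg| + |Df| :=
      (norm_sub_le _ _).trans (add_le_add (hdg.2.trans (le_abs_self _)) (hdf.2.trans (le_abs_self _)))
    exact prod2_bound h1 (abs_norm_le h2)
  have hIR2 : Integrable R2 μ := by
    apply integrable_of_ae_bound (C := (|Cg| + |Cf|)^2 * |Dg|^2)
      (((mag.sub maf).pow_const 2 |>.mul (mdg.norm.pow_const 2)).aestronglyMeasurable)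
    filter_upwards [hDg, ae_restrict_mem measurableSet_Ioc] with ρ hd hρ
    have h1 : |⟪g ρ, e1⟫ - ⟪f ρ, e1⟫| ≤ |Cg| + |Cf| :=
      (abs_sub _ _).trans (add_le_add (hing ρ (Ioc_subset_Icc_self hρ)) (hinf ρ (Ioc_subset_Icc_self hρ)))
    have h2 : ‖deriv g ρ‖ ≤ |Dg| := hd.2.trans (le_abs_self _)
    exact prod2_bound h1 (abs_norm_le h2)
  -- the scheme integrand
  set Φ : ℝ → ℝ := fun ρ =>
    (⟪f ρ, e1⟫^2 * ⟪Δt⁻¹ • (g ρ - f ρ), (g - f) ρ⟫ * ‖deriv f ρ‖^2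
      + ⟪f ρ, e1⟫^2 * ⟪deriv g ρ, deriv (g - f) ρ⟫
      + ⟪g ρ, e1⟫ * ⟪(g - f) ρ, e1⟫ * ‖deriv g ρ‖^2) with hΦ
  -- a.e. identity
  have hid : Φ =ᵐ[μ] fun ρ => Δt * gd ρ + (1/2) * ug ρ - (1/2) * uf ρ
      + ((1/2) * R1 ρ + (1/2) * R2 ρ) := by
    filter_upwards [hDf, hDg] with ρ hdf hdg
    have hηd : deriv (g - f) ρ = deriv g ρ - deriv f ρ := by
      rw [show g - f = (fun y => g y - f y) from rfl]
      exact deriv_sub hdg.1 hdf.1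
    have happ : (g - f) ρ = g ρ - f ρ := rfl
    simp only [hΦ, hgd, hug, huf, hR1, hR2, hηd, happ]
    have i1 : ⟪Δt⁻¹ • (g ρ - f ρ), g ρ - f ρ⟫ = Δt⁻¹ * ‖g ρ - f ρ‖^2 := by
      rw [real_inner_smul_left, real_inner_self_eq_norm_sq]
    have i2 : ‖Δt⁻¹ • (g ρ - f ρ)‖^2 = (Δt⁻¹)^2 * ‖g ρ - f ρ‖^2 := by
      rw [norm_smul, Real.norm_eq_abs, abs_of_pos (inv_pos.mpr hΔt), mul_pow]
    have i3 : ⟪deriv g ρ, deriv g ρ - deriv f ρ⟫ = ‖deriv g ρ‖^2 - ⟪deriv g ρ, deriv f ρ⟫ := by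
      rw [inner_sub_right, real_inner_self_eq_norm_sq]
    have i4 : ⟪g ρ - f ρ, e1⟫ = ⟪g ρ, e1⟫ - ⟪f ρ, e1⟫ := inner_sub_left _ _ _
    have i5 : ‖deriv g ρ - deriv f ρ‖^2
        = ‖deriv g ρ‖^2 - 2*⟪deriv g ρ, deriv f ρ⟫ + ‖deriv f ρ‖^2 := by
      exact norm_sub_sq_real _ _
    rw [i1, i2, i3, i4, i5]
    have hne : Δt ≠ 0 := ne_of_gt hΔt
    field_simp
    ring
  -- turn hQ into a μ-integral
  have hQ' : ∫ ρ, Φ ρ ∂μ = 0 := by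
    rw [hμ, ← intervalIntegral.integral_of_le zero_le_one]
    exact hQ
  have hsplit : ∫ ρ, Φ ρ ∂μ
      = Δt * ∫ ρ, gd ρ ∂μ + (1/2) * ∫ ρ, ug ρ ∂μ - (1/2) * ∫ ρ, uf ρ ∂μ
        + ((1/2) * ∫ ρ, R1 ρ ∂μ + (1/2) * ∫ ρ, R2 ρ ∂μ) := by
    have hA : Integrable (fun a => Δt * gd a + (1/2) * ug a) μ := by
      exact (hIgd.const_mul Δt).add (hIug.const_mul (1/2))
    have hB : Integrable (fun a => Δt * gd a + (1/2) * ug a - (1/2) * uf a) μ := by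
      exact hA.sub (hIuf.const_mul (1/2))
    have hC : Integrable (fun a => (1/2) * R1 a + (1/2) * R2 a) μ := by
      exact (hIR1.const_mul (1/2)).add (hIR2.const_mul (1/2))
    rw [integral_congr_ae hid, integral_add hB hC, integral_sub hA (hIuf.const_mul (1/2)),
      integral_add (hIgd.const_mul Δt) (hIug.const_mul (1/2)),
      integral_add (hIR1.const_mul (1/2)) (hIR2.const_mul (1/2)),
      integral_const_mul, integral_const_mul, integral_const_mul, integral_const_mul,
      integral_const_mul]
  have hR1nn : 0 ≤ ∫ ρ, R1 ρ ∂μ := integral_nonneg (fun ρ => by simp only [hR1]; positivity)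
  have hR2nn : 0 ≤ ∫ ρ, R2 ρ ∂μ := integral_nonneg (fun ρ => by simp only [hR2]; positivity)
  have goal' : Δt * ∫ ρ, gd ρ ∂μ + (1/2) * ∫ ρ, ug ρ ∂μ ≤ (1/2) * ∫ ρ, uf ρ ∂μ := by
    rw [hsplit] at hQ'; linarith
  rw [intervalIntegral.integral_of_le zero_le_one, intervalIntegral.integral_of_le zero_le_one,
    intervalIntegral.integral_of_le zero_le_one]
  exact goal'


theorem global_stability
    (J : ℕ) (hJ : 3 ≤ J) (Δt : ℝ) (hΔt : 0 < Δt) (M : ℕ)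
    (X : ℕ → ℝ → E2) (hX : ∀ m ≤ M, X m ∈ Vh J)
    (hscheme : ∀ m : ℕ, m < M → ∀ η ∈ Vh J, Qform Δt (X m) (X (m+1)) η = 0) :
    ∀ n : ℕ, n < M →
      (1/2) * (∫ ρ in (0:ℝ)..1, ⟪X (n+1) ρ, e1⟫^2 * ‖deriv (X (n+1)) ρ‖^2)
        + Δt * ∑ m ∈ Finset.range (n+1),
            ∫ ρ in (0:ℝ)..1,
              ⟪X m ρ, e1⟫^2 * ‖Δt⁻¹ • (X (m+1) ρ - X m ρ)‖^2 * ‖deriv (X m) ρ‖^2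
      ≤ (1/2) * (∫ ρ in (0:ℝ)..1, ⟪X 0 ρ, e1⟫^2 * ‖deriv (X 0) ρ‖^2) := by
  have hJ0 : 0 < J := by omega
  set E : ℕ → ℝ := fun m => ∫ ρ in (0:ℝ)..1, ⟪X m ρ, e1⟫^2 * ‖deriv (X m) ρ‖^2 with hE
  set G : ℕ → ℝ := fun m => ∫ ρ in (0:ℝ)..1,
      ⟪X m ρ, e1⟫^2 * ‖Δt⁻¹ • (X (m+1) ρ - X m ρ)‖^2 * ‖deriv (X m) ρ‖^2 with hG
  have hstep : ∀ m : ℕ, m < M → Δt * G m + (1/2) * E (m+1) ≤ (1/2) * E m := by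
    intro m hm
    have hfm : X m ∈ Vh J := hX m (by omega)
    have hgm : X (m+1) ∈ Vh J := hX (m+1) (by omega)
    exact step_ineq hJ0 hΔt hfm hgm
      (hscheme m hm (X (m+1) - X m) (vh_sub hgm hfm))
  have key : ∀ n : ℕ, n < M →
      (1/2) * E (n+1) + Δt * ∑ m ∈ Finset.range (n+1), G m ≤ (1/2) * E 0 := by
    intro n
    induction n with
    | zero =>
        intro hn
        rw [Finset.sum_range_one]
        linarith [hstep 0 hn]
    | succ k ih =>
        intro hn
        have hk : k < M := by omega
        have h1 := ih hk
        have h2 := hstep (k+1) hn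
        rw [Finset.sum_range_succ]
        have hmul : Δt * ((∑ m ∈ Finset.range (k+1), G m) + G (k+1))
            = Δt * (∑ m ∈ Finset.range (k+1), G m) + Δt * G (k+1) := mul_add _ _ _
        rw [hmul]
        linarith
  intro n hn
  exact key n hn
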